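/- Let s ≥ 1 and let A₁,…,A_s be 2×2 complex matrices with entries A_t = (α^{(t)}_{i,j}). Let (a_n)_{n≥0} and (b_n)_{n≥0} be complex sequences satisfying, for all n ≥ s, a_n = Σ_{t=1}^{s} (α^{(t)}_{1,1} a_{n−t} + α^{(t)}_{1,2} b_{n−t}) and b_n = Σ_{t=1}^{s} (α^{(t)}_{2,1} a_{n−t} + α^{(t)}_{2,2} b_{n−t}). Then both (a_n) and (b_n) satisfy the same homogeneous linear recurrence of order 2s: z_n = Σ_{i=1}^{2s} c^{(s)}_i z_{n−i} for all n ≥ 2s, where the coefficient vector c^{(s)} ∈ ℂ^{2s} is defined recursively by c^{(1)} = (tr(A₁), −det(A₁)) and, for s ≥ 2, c^{(s)}_i = c^{(s−1)}_i for 1 ≤ i ≤ s−1, c^{(s)}_s = c^{(s−1)}_s + tr(A_s), c^{(s)}_{s+ℓ} = c^{(s−1)}_{s+ℓ} − Det⟨A^{(ℓ,s)}⟩ for 1 ≤ ℓ ≤ s−2, c^{(s)}_{2s−1} = −Det⟨A^{(s−1,s)}⟩, and c^{(s)}_{2s} = −det(A_s). -/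
import Mathlib

open Matrix Finset

/-- The 2×2 matrix whose first column is the first column of `A` and whose
second column is the second column of `B`. -/
noncomputable def mixMat (A B : Matrix (Fin 2) (Fin 2) ℂ) : Matrix (Fin 2) (Fin 2) ℂ :=
  Matrix.of fun i j => if j = 0 then A i j else B i j

/-- `Det⟨A^{(i,j)}⟩ = det(A_{i,j}) + det(A_{j,i})`. -/
noncomputable def detPair (A B : Matrix (Fin 2) (Fin 2) ℂ) : ℂ :=
  (mixMat A B).det + (mixMat B A).det

namespace Stmt0Aux

/-- coefficient sequence of the (i,j) entry of the matrix polynomial `δ_{ij} - ∑ A_t y^t`. -/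
noncomputable def r (A : ℕ → Matrix (Fin 2) (Fin 2) ℂ) (s : ℕ) (i j : Fin 2) : ℕ → ℂ :=
  fun t => if t = 0 then (if i = j then 1 else 0) else if t ≤ s then -(A t i j) else 0

/-- convolution of coefficient sequences. -/
noncomputable def conv (p q : ℕ → ℂ) : ℕ → ℂ := fun k => ∑ j ∈ range (k + 1), p j * q (k - j)

/-- coefficients of the "determinant" polynomial. -/
noncomputable def qq (A : ℕ → Matrix (Fin 2) (Fin 2) ℂ) (s : ℕ) : ℕ → ℂ :=
  fun k => conv (r A s 0 0) (r A s 1 1) k - conv (r A s 0 1) (r A s 1 0) k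

/-- action of a coefficient sequence (truncated at degree d) on a sequence. -/
noncomputable def star (p z : ℕ → ℂ) (d n : ℕ) : ℂ := ∑ k ∈ range (d + 1), p k * z (n - k)

lemma detPair_eq (A B : Matrix (Fin 2) (Fin 2) ℂ) :
    detPair A B = A 0 0 * B 1 1 + B 0 0 * A 1 1 - A 0 1 * B 1 0 - B 0 1 * A 1 0 := by
  simp [detPair, mixMat, Matrix.det_fin_two]
  ring

lemma r_zero (A : ℕ → Matrix (Fin 2) (Fin 2) ℂ) (s : ℕ) (i j : Fin 2) :
    r A s i j 0 = if i = j then 1 else 0 := by simp [r]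

lemma r_big (A : ℕ → Matrix (Fin 2) (Fin 2) ℂ) (s : ℕ) (i j : Fin 2) {t : ℕ} (ht : s < t) :
    r A s i j t = 0 := by
  have h1 : t ≠ 0 := by omega
  have h2 : ¬ t ≤ s := by omega
  simp [r, h1, h2]

lemma conv_comm (p q : ℕ → ℂ) (k : ℕ) : conv p q k = conv q p k := by
  unfold conv
  rw [← Finset.sum_range_reflect]
  apply Finset.sum_congr rfl
  intro j hj
  simp only [Finset.mem_range] at hj
  have h1 : k + 1 - 1 - j = k - j := by omega
  have h2 : k - (k - j) = j := by omega
  rw [h1, h2, mul_comm]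

lemma conv_big {p q : ℕ → ℂ} {s : ℕ} (hp : ∀ t, s < t → p t = 0) (hq : ∀ t, s < t → q t = 0)
    {k : ℕ} (hk : 2 * s < k) : conv p q k = 0 := by
  unfold conv
  apply Finset.sum_eq_zero
  intro j hj
  simp only [Finset.mem_range] at hj
  by_cases h : j ≤ s
  · rw [hq (k - j) (by omega), mul_zero]
  · rw [hp j (by omega), zero_mul]

lemma qq_zero (A : ℕ → Matrix (Fin 2) (Fin 2) ℂ) (s : ℕ) : qq A s 0 = 1 := by
  simp [qq, conv, r]

lemma qq_big (A : ℕ → Matrix (Fin 2) (Fin 2) ℂ) (s : ℕ) {k : ℕ} (hk : 2 * s < k) :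
    qq A s k = 0 := by
  unfold qq
  rw [conv_big (fun t ht => r_big A s 0 0 ht) (fun t ht => r_big A s 1 1 ht) hk,
    conv_big (fun t ht => r_big A s 0 1 ht) (fun t ht => r_big A s 1 0 ht) hk, sub_zero]

lemma sum_ite_left {S : Finset ℕ} (s : ℕ) (u : ℂ) (g : ℕ → ℂ) :
    ∑ j ∈ S, (if j = s then u else 0) * g j = if s ∈ S then u * g s else 0 := by
  rw [← Finset.sum_ite_eq' S s (fun j => u * g j)]
  apply Finset.sum_congr rfl
  intro j hj
  by_cases h : j = s <;> simp [h]

lemma sum_ite_right (k s : ℕ) (v : ℂ) (g : ℕ → ℂ) :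
    ∑ j ∈ range (k + 1), g j * (if k - j = s then v else 0)
      = if s ≤ k then g (k - s) * v else 0 := by
  by_cases hsk : s ≤ k
  · have : ∀ j ∈ range (k + 1), g j * (if k - j = s then v else 0)
        = if j = k - s then g j * v else 0 := by
      intro j hj
      simp only [Finset.mem_range] at hj
      by_cases h : j = k - s
      · have hks : k - (k - s) = s := by omega
        simp [h, hks]
      · have : k - j ≠ s := by omega
        simp [h, this]
    rw [Finset.sum_congr rfl this, Finset.sum_ite_eq' (range (k+1)) (k-s) (fun j => g j * v)]
    simp [Finset.mem_range, hsk, Nat.lt_succ_iff, Nat.sub_le]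
  · have : ∀ j ∈ range (k + 1), g j * (if k - j = s then v else 0) = 0 := by
      intro j hj
      have : k - j ≠ s := by omega
      simp [this]
    rw [Finset.sum_congr rfl this]
    simp [hsk]

lemma conv_split (p q : ℕ → ℂ) (u v : ℂ) (s : ℕ) (hs : 1 ≤ s) (k : ℕ) :
    conv (fun t => p t + if t = s then u else 0) (fun t => q t + if t = s then v else 0) k
    = conv p q k + (if s ≤ k then u * q (k - s) + p (k - s) * v else 0)
      + (if k = 2 * s then u * v else 0) := by
  unfold conv
  have expand : ∀ j ∈ range (k + 1),
      (p j + if j = s then u else 0) * (q (k - j) + if k - j = s then v else 0)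
      = p j * q (k - j) + ((if j = s then u else 0) * q (k - j)
        + p j * (if k - j = s then v else 0))
        + (if j = s then u else 0) * (if k - j = s then v else 0) := by
    intro j _; ring
  rw [Finset.sum_congr rfl expand]
  rw [Finset.sum_add_distrib, Finset.sum_add_distrib, Finset.sum_add_distrib]
  have h2 : ∑ j ∈ range (k + 1), (if j = s then u else 0) * q (k - j)
      = if s ≤ k then u * q (k - s) else 0 := by
    rw [sum_ite_left]; simp [Finset.mem_range, Nat.lt_succ_iff]
  have h3 : ∑ j ∈ range (k + 1), p j * (if k - j = s then v else 0)
      = if s ≤ k then p (k - s) * v else 0 := sum_ite_right k s v p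
  have h4 : ∑ j ∈ range (k + 1), (if j = s then u else 0) * (if k - j = s then v else 0)
      = if k = 2 * s then u * v else 0 := by
    rw [sum_ite_left]
    by_cases hsk : s ≤ k
    · by_cases hk2 : k = 2 * s
      · have hks : k - s = s := by omega
        have hmem : s ∈ range (k + 1) := by simp only [Finset.mem_range]; omega
        rw [if_pos hmem, if_pos hks, if_pos hk2]
      · have hks : ¬ (k - s = s) := by omega
        have hmem : s ∈ range (k + 1) := by simp only [Finset.mem_range]; omega
        rw [if_pos hmem, if_neg hks, if_neg hk2, mul_zero]
    · have hk2 : ¬ k = 2 * s := by omega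
      have hmem : s ∉ range (k + 1) := by simp only [Finset.mem_range]; omega
      rw [if_neg hmem, if_neg hk2]
  rw [h2, h3, h4]
  congr 1
  split_ifs <;> ring

lemma r_succ (A : ℕ → Matrix (Fin 2) (Fin 2) ℂ) (s : ℕ) (hs : 1 ≤ s) (i j : Fin 2) :
    r A s i j = fun t => r A (s - 1) i j t + if t = s then -(A s i j) else 0 := by
  funext t
  unfold r
  by_cases ht0 : t = 0
  · have hts : ¬ t = s := by omega
    rw [if_pos ht0, if_pos ht0, if_neg hts, add_zero]
  · rw [if_neg ht0, if_neg ht0]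
    by_cases hts : t = s
    · have e1 : t ≤ s := by omega
      have e2 : ¬ t ≤ s - 1 := by omega
      rw [if_pos e1, if_neg e2, if_pos hts, hts, zero_add]
    · rw [if_neg hts, add_zero]
      by_cases htl : t ≤ s
      · have : t ≤ s - 1 := by omega
        rw [if_pos htl, if_pos this]
      · have : ¬ t ≤ s - 1 := by omega
        rw [if_neg htl, if_neg this]

lemma qq_succ (A : ℕ → Matrix (Fin 2) (Fin 2) ℂ) (s : ℕ) (hs : 1 ≤ s) (k : ℕ) :
    qq A s k = qq A (s - 1) k
      + (if s ≤ k then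
          -(A s 0 0 * r A (s - 1) 1 1 (k - s)) - r A (s - 1) 0 0 (k - s) * A s 1 1
          + A s 0 1 * r A (s - 1) 1 0 (k - s) + r A (s - 1) 0 1 (k - s) * A s 1 0
        else 0)
      + (if k = 2 * s then A s 0 0 * A s 1 1 - A s 0 1 * A s 1 0 else 0) := by
  unfold qq
  rw [r_succ A s hs 0 0, r_succ A s hs 1 1, r_succ A s hs 0 1, r_succ A s hs 1 0]
  rw [conv_split (r A (s-1) 0 0) (r A (s-1) 1 1) (-(A s 0 0)) (-(A s 1 1)) s hs k,
     conv_split (r A (s-1) 0 1) (r A (s-1) 1 0) (-(A s 0 1)) (-(A s 1 0)) s hs k]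
  split_ifs <;> ring

lemma c_eq (A : ℕ → Matrix (Fin 2) (Fin 2) ℂ) (c : ℕ → ℕ → ℂ)
    (hc11 : c 1 1 = (A 1).trace)
    (hc12 : c 1 2 = -(A 1).det)
    (hrec : ∀ m, 2 ≤ m →
      ((∀ i, 1 ≤ i → i ≤ m - 1 → c m i = c (m - 1) i) ∧
       c m m = c (m - 1) m + (A m).trace ∧
       (∀ ℓ, 1 ≤ ℓ → ℓ ≤ m - 2 → c m (m + ℓ) = c (m - 1) (m + ℓ) - detPair (A ℓ) (A m)) ∧
       c m (2 * m - 1) = -detPair (A (m - 1)) (A m) ∧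
       c m (2 * m) = -(A m).det)) :
    ∀ s, 1 ≤ s → ∀ i, 1 ≤ i → i ≤ 2 * s → c s i = - qq A s i := by
  intro s
  induction s with
  | zero => intro h; omega
  | succ s IH =>
    intro _ i hi1 hi2
    rcases Nat.eq_zero_or_pos s with rfl | hs
    · -- base case s + 1 = 1
      interval_cases i
      · rw [hc11]
        have : qq A 1 1 = -((A 1).trace) := by
          simp [qq, conv, r, Finset.sum_range_succ, Matrix.trace_fin_two]
        rw [this]; ring
      · rw [hc12]
        have : qq A 1 2 = (A 1).det := by
          simp [qq, conv, r, Finset.sum_range_succ, Matrix.det_fin_two]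
        rw [this]
    · -- inductive step, s ≥ 1
      have hs2 : 2 ≤ s + 1 := by omega
      obtain ⟨h1, h2, h3, h4, h5⟩ := hrec (s + 1) hs2
      simp only [Nat.add_sub_cancel] at h1 h2 h3 h4 h5
      have hq := qq_succ A (s + 1) (by omega)
      simp only [Nat.add_sub_cancel] at hq
      by_cases hc1 : i ≤ s
      · -- i ≤ s : coefficients unchanged
        rw [h1 i hi1 hc1, IH hs i hi1 (by omega), hq i]
        have hA : ¬ (s + 1 ≤ i) := by omega
        have hB : ¬ (i = 2 * (s + 1)) := by omega
        rw [if_neg hA, if_neg hB]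
        ring
      · by_cases hceq : i = s + 1
        · -- i = s + 1 : trace term
          subst hceq
          rw [h2, IH hs (s+1) (by omega) (by omega), hq (s+1)]
          have hA : s + 1 ≤ s + 1 := le_refl _
          have hB : ¬ (s + 1 = 2 * (s + 1)) := by omega
          rw [if_pos hA, if_neg hB]
          have : s + 1 - (s + 1) = 0 := by omega
          rw [this, r_zero, r_zero, r_zero, r_zero]
          simp [Matrix.trace_fin_two]
          ring
        · by_cases hmid : i ≤ 2 * s
          · -- i = s + 1 + ℓ with 1 ≤ ℓ ≤ s - 1
            set ℓ := i - (s + 1) with hℓ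
            have hℓ1 : 1 ≤ ℓ := by omega
            have hℓ2 : ℓ ≤ s - 1 := by omega
            have hieq : i = s + 1 + ℓ := by omega
            rw [hieq] at hi1 hi2 ⊢
            rw [h3 ℓ hℓ1 (by omega), IH hs (s + 1 + ℓ) (by omega) (by omega), hq (s + 1 + ℓ)]
            have hA : s + 1 ≤ s + 1 + ℓ := by omega
            have hB : ¬ (s + 1 + ℓ = 2 * (s + 1)) := by omega
            rw [if_pos hA, if_neg hB]
            have hsub : s + 1 + ℓ - (s + 1) = ℓ := by omega
            rw [hsub]
            have hrv : ∀ (u v : Fin 2), r A s u v ℓ = -(A ℓ u v) := by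
              intro u v
              have e1 : ¬ ℓ = 0 := by omega
              have e2 : ℓ ≤ s := by omega
              simp [r, e1, e2]
            rw [hrv 1 1, hrv 0 0, hrv 1 0, hrv 0 1, detPair_eq]
            ring
          · by_cases hc2 : i = 2 * s + 1
            · -- i = 2(s+1) - 1
              have h4' : c (s + 1) (2 * s + 1) = -detPair (A s) (A (s + 1)) := by
                have : 2 * (s + 1) - 1 = 2 * s + 1 := by omega
                rwa [this] at h4
              rw [hc2, h4', hq (2 * s + 1)]
              have hA : s + 1 ≤ 2 * s + 1 := by omega
              have hB : ¬ (2 * s + 1 = 2 * (s + 1)) := by omega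
              rw [if_pos hA, if_neg hB]
              have hq0 : qq A s (2 * s + 1) = 0 := qq_big A s (by omega)
              rw [hq0]
              have hsub : 2 * s + 1 - (s + 1) = s := by omega
              rw [hsub]
              have hrv : ∀ (u v : Fin 2), r A s u v s = -(A s u v) := by
                intro u v
                have e1 : ¬ s = 0 := by omega
                simp [r, e1]
              rw [hrv 1 1, hrv 0 0, hrv 1 0, hrv 0 1, detPair_eq]
              ring
            · -- i = 2(s+1)
              have hieq : i = 2 * (s + 1) := by omega
              rw [hieq, h5, hq (2 * (s + 1))]
              have hA : s + 1 ≤ 2 * (s + 1) := by omega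
              rw [if_pos hA, if_pos rfl]
              have hq0 : qq A s (2 * (s + 1)) = 0 := qq_big A s (by omega)
              rw [hq0]
              have hsub : 2 * (s + 1) - (s + 1) = s + 1 := by omega
              rw [hsub]
              have hrv : ∀ (u v : Fin 2), r A s u v (s + 1) = 0 := fun u v =>
                r_big A s u v (by omega)
              rw [hrv 1 1, hrv 0 0, hrv 1 0, hrv 0 1, Matrix.det_fin_two]
              ring

lemma star_sub (p q z : ℕ → ℂ) (d n : ℕ) :
    star (fun k => p k - q k) z d n = star p z d n - star q z d n := by
  simp [star, sub_mul, Finset.sum_sub_distrib]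

/-- Rearrangement: acting by a convolution equals iterated action. -/
lemma star_conv (p q z : ℕ → ℂ) (s : ℕ) (hp : ∀ t, s < t → p t = 0)
    (hq : ∀ t, s < t → q t = 0) (n : ℕ) :
    star (conv p q) z (2 * s) n = ∑ j ∈ range (s + 1), p j * star q z s (n - j) := by
  unfold star conv
  have step1 : ∀ k ∈ range (2 * s + 1),
      (∑ j ∈ range (k + 1), p j * q (k - j)) * z (n - k)
      = ∑ j ∈ range (2 * s + 1), (if j ≤ k then p j * q (k - j) * z (n - k) else 0) := by
    intro k hk
    simp only [Finset.mem_range] at hk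
    rw [Finset.sum_mul]
    rw [show (∑ j ∈ range (k + 1), p j * q (k - j) * z (n - k))
        = ∑ j ∈ range (k + 1), (if j ≤ k then p j * q (k - j) * z (n - k) else 0) from
      Finset.sum_congr rfl (fun j hj => by
        simp only [Finset.mem_range] at hj
        rw [if_pos (by omega : j ≤ k)])]
    exact Finset.sum_subset (Finset.range_subset_range.mpr (by omega : k + 1 ≤ 2 * s + 1))
      (fun x _ hx => by
        simp only [Finset.mem_range, not_lt] at hx
        rw [if_neg (by omega : ¬ x ≤ k)])
  rw [Finset.sum_congr rfl step1, Finset.sum_comm]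
  have step2 : ∀ j ∈ range (2 * s + 1),
      (∑ k ∈ range (2 * s + 1), if j ≤ k then p j * q (k - j) * z (n - k) else 0)
      = if j ≤ s then p j * ∑ l ∈ range (s + 1), q l * z (n - j - l) else 0 := by
    intro j hj
    simp only [Finset.mem_range] at hj
    by_cases hjs : j ≤ s
    · rw [if_pos hjs]
      have hfil : Finset.filter (fun k => j ≤ k) (range (2 * s + 1)) = Finset.Ico j (2 * s + 1) := by
        ext x; simp only [Finset.mem_filter, Finset.mem_range, Finset.mem_Ico]; omega
      rw [← Finset.sum_filter, hfil, Finset.sum_Ico_eq_sum_range]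
      have hlen : 2 * s + 1 - j = (s + 1) + (s - j) := by omega
      rw [hlen]
      have congr1 : ∀ l ∈ range ((s + 1) + (s - j)),
          p j * q (j + l - j) * z (n - (j + l)) = if l ≤ s then p j * q l * z (n - j - l) else 0 := by
        intro l hl
        have e1 : j + l - j = l := by omega
        have e2 : n - (j + l) = n - j - l := by omega
        rw [e1, e2]
        by_cases hls : l ≤ s
        · rw [if_pos hls]
        · rw [if_neg hls, hq l (by omega), mul_zero, zero_mul]
      rw [Finset.sum_congr rfl congr1]
      rw [← Finset.sum_subset (Finset.range_subset_range.mpr (by omega : s + 1 ≤ (s + 1) + (s - j)))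
        (by intro x _ hx; simp only [Finset.mem_range, not_lt] at hx
            rw [if_neg (by omega)])]
      rw [Finset.mul_sum]
      apply Finset.sum_congr rfl
      intro l hl
      simp only [Finset.mem_range] at hl
      rw [if_pos (by omega), mul_assoc]
    · rw [if_neg hjs]
      apply Finset.sum_eq_zero
      intro k _
      rw [hp j (by omega)]
      simp
  rw [Finset.sum_congr rfl step2]
  rw [← Finset.sum_subset (Finset.range_subset_range.mpr (by omega : s + 1 ≤ 2 * s + 1))
    (by intro x _ hx; simp only [Finset.mem_range, not_lt] at hx
        rw [if_neg (by omega)])]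
  apply Finset.sum_congr rfl
  intro j hj
  simp only [Finset.mem_range] at hj
  rw [if_pos (by omega : j ≤ s)]

lemma star_r (A : ℕ → Matrix (Fin 2) (Fin 2) ℂ) (s : ℕ) (_hs : 1 ≤ s) (i j : Fin 2)
    (z : ℕ → ℂ) (n : ℕ) :
    star (r A s i j) z s n
      = (if i = j then z n else 0) - ∑ t ∈ Icc 1 s, A t i j * z (n - t) := by
  unfold star
  rw [Finset.sum_range_succ']
  have h0 : r A s i j 0 * z (n - 0) = (if i = j then z n else 0) := by
    rw [r_zero]
    by_cases h : i = j <;> simp [h]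
  rw [h0]
  have h1 : ∀ k ∈ range s, r A s i j (k + 1) * z (n - (k + 1))
      = -(A (k + 1) i j * z (n - (k + 1))) := by
    intro k hk
    simp only [Finset.mem_range] at hk
    have e1 : ¬ (k + 1 = 0) := by omega
    have e2 : k + 1 ≤ s := by omega
    simp [r, e1, e2]
  rw [Finset.sum_congr rfl h1]
  rw [show Finset.Icc 1 s = Finset.Ico 1 (s + 1) by rw [Finset.Ico_add_one_right_eq_Icc]]
  rw [Finset.sum_Ico_eq_sum_range]
  simp only [Nat.add_sub_cancel]
  rw [Finset.sum_neg_distrib]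
  have : ∀ k ∈ range s, A (1 + k) i j * z (n - (1 + k)) = A (k + 1) i j * z (n - (k + 1)) := by
    intro k _
    rw [Nat.add_comm 1 k]
  rw [Finset.sum_congr rfl this]
  ring

lemma star_row0 (A : ℕ → Matrix (Fin 2) (Fin 2) ℂ) (s : ℕ) (hs : 1 ≤ s) (a b : ℕ → ℂ)
    (ha : ∀ n, s ≤ n → a n = ∑ t ∈ Icc 1 s, (A t 0 0 * a (n - t) + A t 0 1 * b (n - t)))
    (n : ℕ) (hn : s ≤ n) :
    star (r A s 0 0) a s n = - star (r A s 0 1) b s n := by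
  rw [star_r A s hs 0 0 a n, star_r A s hs 0 1 b n]
  rw [ha n hn, Finset.sum_add_distrib]
  norm_num

lemma star_row1 (A : ℕ → Matrix (Fin 2) (Fin 2) ℂ) (s : ℕ) (hs : 1 ≤ s) (a b : ℕ → ℂ)
    (hb : ∀ n, s ≤ n → b n = ∑ t ∈ Icc 1 s, (A t 1 0 * a (n - t) + A t 1 1 * b (n - t)))
    (n : ℕ) (hn : s ≤ n) :
    star (r A s 1 1) b s n = - star (r A s 1 0) a s n := by
  rw [star_r A s hs 1 1 b n, star_r A s hs 1 0 a n]
  rw [hb n hn, Finset.sum_add_distrib]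
  norm_num

lemma star_qq (A : ℕ → Matrix (Fin 2) (Fin 2) ℂ) (s : ℕ) (hs : 1 ≤ s) (a b : ℕ → ℂ)
    (ha : ∀ n, s ≤ n → a n = ∑ t ∈ Icc 1 s, (A t 0 0 * a (n - t) + A t 0 1 * b (n - t)))
    (hb : ∀ n, s ≤ n → b n = ∑ t ∈ Icc 1 s, (A t 1 0 * a (n - t) + A t 1 1 * b (n - t)))
    (n : ℕ) (hn : 2 * s ≤ n) :
    star (qq A s) a (2 * s) n = 0 ∧ star (qq A s) b (2 * s) n = 0 := by
  have hr : ∀ (i j : Fin 2) t, s < t → r A s i j t = 0 := fun i j t ht => r_big A s i j ht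
  have hcc : ∀ (i j u v : Fin 2), conv (r A s i j) (r A s u v) = conv (r A s u v) (r A s i j) :=
    fun i j u v => funext (fun k => conv_comm _ _ k)
  have key : ∀ (z : ℕ → ℂ), star (qq A s) z (2 * s) n
      = star (conv (r A s 0 0) (r A s 1 1)) z (2 * s) n
        - star (conv (r A s 0 1) (r A s 1 0)) z (2 * s) n := by
    intro z
    exact star_sub _ _ z (2 * s) n
  have hm : ∀ j ∈ range (s + 1), s ≤ n - j := by
    intro j hj
    simp only [Finset.mem_range] at hj
    omega
  constructor
  · rw [key a]
    rw [show conv (r A s 0 0) (r A s 1 1) = conv (r A s 1 1) (r A s 0 0) from hcc 0 0 1 1]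
    rw [star_conv _ _ a s (hr 1 1) (hr 0 0) n, star_conv _ _ a s (hr 0 1) (hr 1 0) n]
    have e1 : ∀ j ∈ range (s + 1), r A s 1 1 j * star (r A s 0 0) a s (n - j)
        = -(r A s 1 1 j * star (r A s 0 1) b s (n - j)) := by
      intro j hj
      rw [star_row0 A s hs a b ha (n - j) (hm j hj)]
      ring
    have e2 : ∀ j ∈ range (s + 1), r A s 0 1 j * star (r A s 1 0) a s (n - j)
        = -(r A s 0 1 j * star (r A s 1 1) b s (n - j)) := by
      intro j hj
      have := star_row1 A s hs a b hb (n - j) (hm j hj)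
      rw [show star (r A s 1 0) a s (n - j) = - star (r A s 1 1) b s (n - j) by
        rw [this]; ring]
      ring
    rw [Finset.sum_congr rfl e1, Finset.sum_congr rfl e2]
    rw [Finset.sum_neg_distrib, Finset.sum_neg_distrib]
    rw [← star_conv (r A s 1 1) (r A s 0 1) b s (hr 1 1) (hr 0 1) n,
        ← star_conv (r A s 0 1) (r A s 1 1) b s (hr 0 1) (hr 1 1) n]
    rw [show conv (r A s 1 1) (r A s 0 1) = conv (r A s 0 1) (r A s 1 1) from hcc 1 1 0 1]
    ring
  · rw [key b]
    rw [show conv (r A s 0 1) (r A s 1 0) = conv (r A s 1 0) (r A s 0 1) from hcc 0 1 1 0]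
    rw [star_conv _ _ b s (hr 0 0) (hr 1 1) n, star_conv _ _ b s (hr 1 0) (hr 0 1) n]
    have e1 : ∀ j ∈ range (s + 1), r A s 0 0 j * star (r A s 1 1) b s (n - j)
        = -(r A s 0 0 j * star (r A s 1 0) a s (n - j)) := by
      intro j hj
      rw [star_row1 A s hs a b hb (n - j) (hm j hj)]
      ring
    have e2 : ∀ j ∈ range (s + 1), r A s 1 0 j * star (r A s 0 1) b s (n - j)
        = -(r A s 1 0 j * star (r A s 0 0) a s (n - j)) := by
      intro j hj
      have := star_row0 A s hs a b ha (n - j) (hm j hj)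
      rw [show star (r A s 0 1) b s (n - j) = - star (r A s 0 0) a s (n - j) by
        rw [this]; ring]
      ring
    rw [Finset.sum_congr rfl e1, Finset.sum_congr rfl e2]
    rw [Finset.sum_neg_distrib, Finset.sum_neg_distrib]
    rw [← star_conv (r A s 0 0) (r A s 1 0) a s (hr 0 0) (hr 1 0) n,
        ← star_conv (r A s 1 0) (r A s 0 0) a s (hr 1 0) (hr 0 0) n]
    rw [show conv (r A s 0 0) (r A s 1 0) = conv (r A s 1 0) (r A s 0 0) from hcc 0 0 1 0]
    ring

lemma assemble (A : ℕ → Matrix (Fin 2) (Fin 2) ℂ) (c : ℕ → ℕ → ℂ) (s : ℕ)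
    (hcq : ∀ i, 1 ≤ i → i ≤ 2 * s → c s i = - qq A s i) (z : ℕ → ℂ) (n : ℕ)
    (hz0 : star (qq A s) z (2 * s) n = 0) :
    z n = ∑ i ∈ Icc 1 (2 * s), c s i * z (n - i) := by
  have h := hz0
  unfold star at h
  rw [Finset.sum_range_succ', qq_zero] at h
  simp only [Nat.sub_zero, one_mul] at h
  rw [← Finset.Ico_add_one_right_eq_Icc, Finset.sum_Ico_eq_sum_range,
    show 2 * s + 1 - 1 = 2 * s by omega]
  have e : ∀ k ∈ range (2 * s), c s (1 + k) * z (n - (1 + k))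
      = -(qq A s (k + 1) * z (n - (k + 1))) := by
    intro k hk
    simp only [Finset.mem_range] at hk
    rw [hcq (1 + k) (by omega) (by omega), Nat.add_comm 1 k]
    ring
  rw [Finset.sum_congr rfl e, Finset.sum_neg_distrib]
  linear_combination h

end Stmt0Aux

theorem stmt_0 (s : ℕ) (hs : 1 ≤ s) (A : ℕ → Matrix (Fin 2) (Fin 2) ℂ)
    (a b : ℕ → ℂ)
    (ha : ∀ n, s ≤ n → a n = ∑ t ∈ Icc 1 s, (A t 0 0 * a (n - t) + A t 0 1 * b (n - t)))
    (hb : ∀ n, s ≤ n → b n = ∑ t ∈ Icc 1 s, (A t 1 0 * a (n - t) + A t 1 1 * b (n - t)))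
    (c : ℕ → ℕ → ℂ)
    (hc11 : c 1 1 = (A 1).trace)
    (hc12 : c 1 2 = -(A 1).det)
    (hrec : ∀ m, 2 ≤ m →
      ((∀ i, 1 ≤ i → i ≤ m - 1 → c m i = c (m - 1) i) ∧
       c m m = c (m - 1) m + (A m).trace ∧
       (∀ ℓ, 1 ≤ ℓ → ℓ ≤ m - 2 → c m (m + ℓ) = c (m - 1) (m + ℓ) - detPair (A ℓ) (A m)) ∧
       c m (2 * m - 1) = -detPair (A (m - 1)) (A m) ∧
       c m (2 * m) = -(A m).det)) :
    (∀ n, 2 * s ≤ n → a n = ∑ i ∈ Icc 1 (2 * s), c s i * a (n - i)) ∧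
    (∀ n, 2 * s ≤ n → b n = ∑ i ∈ Icc 1 (2 * s), c s i * b (n - i)) := by
  have hcq : ∀ i, 1 ≤ i → i ≤ 2 * s → c s i = - Stmt0Aux.qq A s i :=
    Stmt0Aux.c_eq A c hc11 hc12 hrec s hs
  constructor
  · intro n hn
    exact Stmt0Aux.assemble A c s hcq a n (Stmt0Aux.star_qq A s hs a b ha hb n hn).1
  · intro n hn
    exact Stmt0Aux.assemble A c s hcq b n (Stmt0Aux.star_qq A s hs a b ha hb n hn).2
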